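/- Let f : X̃ → X be a harmonic morphism of finite graphs with X connected. Then for any vertex v ∈ V(X) and any half-edge h ∈ H(X), the quantities Σ_{ṽ ∈ f^{-1}(v)} d_f(ṽ) and |f^{-1}(h)| are equal, and this common value (the global degree of f) is independent of the choice of v or h. -/

import Mathlib

open Finset

/-- Connectivity of a graph presented by half-edges: root map `r` and involution `ι`. -/
def HalfConn {V H : Type*} (r : H → V) (ι : H → H) : Prop :=
  ∀ u v : V, Relation.ReflTransGen (fun a b => ∃ h, r h = a ∧ r (ι h) = b) u v

/-- The (half-edge) Laplacian matrix of a graph: the `(u,v)` entry is the coefficient of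
`u` in `L(v) = Σ_{h ∈ T_v X} (v - r(ι h))`. -/
def halfLapMat {V H : Type*} [Fintype H] [DecidableEq V]
    (r : H → V) (ι : H → H) : Matrix V V ℤ :=
  Matrix.of fun u v => ∑ h : H,
    if r h = v then (if r h = u then 1 else 0) - (if r (ι h) = u then 1 else 0) else 0

/-- Degree (sum of coefficients) of a divisor, as a linear map. -/
def degHom (V : Type*) [Fintype V] : (V → ℤ) →ₗ[ℤ] ℤ where
  toFun d := ∑ v, d v
  map_add' x y := Finset.sum_add_distrib
  map_smul' c x := by simp [Finset.mul_sum]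

/-- Jacobian: degree-zero divisors modulo the image of (the linear map given by) `M`. -/
def jacOfMat {V : Type*} [Fintype V] (M : Matrix V V ℤ) :=
  LinearMap.ker (degHom V) ⧸
    Submodule.comap (LinearMap.ker (degHom V)).subtype (LinearMap.range M.mulVecLin)

/-- Pushforward of divisors along a map of vertex sets: add up the chips in each fiber. -/
def pushV {V W : Type*} [Fintype V] [DecidableEq W] (p : V → W) (d : V → ℤ) : W → ℤ :=
  fun w => ∑ v ∈ Finset.univ.filter (fun v => p v = w), d v

/-- The divisor consisting of a single chip at `v`. -/
def indic {α : Type*} [DecidableEq α] (v : α) : α → ℤ := fun u => if u = v then 1 else 0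

/-- a harmonic morphism `f : X̃ → X` of finite graphs with `X` connected
has a well-defined global degree: `Σ_{vt ∈ f⁻¹(v)} d_f(vt)` and `|f⁻¹(h)|` are equal to a
common value independent of the vertex `v` and the half-edge `h`. -/
theorem stmt10 {V1 H1 V2 H2 : Type*} [Fintype V1] [Fintype H1] [Fintype V2] [Fintype H2]
    [DecidableEq V1] [DecidableEq V2] [DecidableEq H1] [DecidableEq H2]
    (r1 : H1 → V1) (ι1 : H1 → H1) (hι1 : ∀ h, ι1 (ι1 h) = h)
    (r2 : H2 → V2) (ι2 : H2 → H2) (hι2 : ∀ h, ι2 (ι2 h) = h)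
    (fV : V1 → V2) (fH : H1 → H2)
    (hr : ∀ h, fV (r1 h) = r2 (fH h)) (hι : ∀ h, fH (ι1 h) = ι2 (fH h))
    (d : V1 → ℤ)
    (harm : ∀ (vt : V1) (h : H2), r2 h = fV vt →
      d vt = ((Finset.univ.filter (fun h' => r1 h' = vt ∧ fH h' = h)).card : ℤ))
    (hconn : HalfConn r2 ι2) :
    ∃ D : ℤ,
      (∀ v : V2, ∑ vt ∈ Finset.univ.filter (fun vt => fV vt = v), d vt = D) ∧
      (∀ h : H2, ((Finset.univ.filter (fun h' => fH h' = h)).card : ℤ) = D) := by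
  classical
  set g : V2 → ℤ := fun v => ∑ vt ∈ Finset.univ.filter (fun vt => fV vt = v), d vt with hg
  -- Lemma A: fiber over a half-edge has cardinality g (r2 h)
  have lemA : ∀ h : H2, ((Finset.univ.filter (fun h' => fH h' = h)).card : ℤ) = g (r2 h) := by
    intro h
    have hcard : (Finset.univ.filter (fun h' => fH h' = h)).card =
        ∑ vt ∈ Finset.univ.filter (fun vt => fV vt = r2 h),
          ((Finset.univ.filter (fun h' => fH h' = h)).filter (fun h' => r1 h' = vt)).card := by
      apply Finset.card_eq_sum_card_fiberwise
      intro h' hh'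
      simp only [Finset.mem_coe, Finset.mem_filter, Finset.mem_univ, true_and] at hh' ⊢
      rw [hr, hh']
    have hsum : ∀ vt ∈ Finset.univ.filter (fun vt => fV vt = r2 h),
        (((Finset.univ.filter (fun h' => fH h' = h)).filter (fun h' => r1 h' = vt)).card : ℤ)
          = d vt := by
      intro vt hvt
      simp only [Finset.mem_filter, Finset.mem_univ, true_and] at hvt
      rw [harm vt h hvt.symm, Finset.filter_filter]
      congr 2
      ext h'
      simp only [Finset.mem_filter, Finset.mem_univ, true_and]
      tauto
    rw [hg]
    simp only
    rw [hcard, Nat.cast_sum]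
    exact Finset.sum_congr rfl hsum
  -- Lemma B: fibers over h and ι2 h have equal cardinality
  have lemB : ∀ h : H2, (Finset.univ.filter (fun h' => fH h' = h)).card =
      (Finset.univ.filter (fun h' => fH h' = ι2 h)).card := by
    intro h
    apply Finset.card_bij' (fun h' _ => ι1 h') (fun h' _ => ι1 h')
    · intro h' hh'
      simp only [Finset.mem_filter, Finset.mem_univ, true_and] at hh' ⊢
      rw [hι, hh']
    · intro h' hh'
      simp only [Finset.mem_filter, Finset.mem_univ, true_and] at hh' ⊢
      rw [hι, hh', hι2]
    · intro h' _; exact hι1 h'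
    · intro h' _; exact hι1 h'
  -- g is constant
  have gconst : ∀ u v : V2, g u = g v := by
    intro u v
    induction hconn u v with
    | refl => rfl
    | tail _ hstep ih =>
      obtain ⟨h, hh1, hh2⟩ := hstep
      rw [ih, ← hh1, ← lemA h, lemB h, ← hh2, ← lemA (ι2 h)]
  by_cases hV : Nonempty V2
  · obtain ⟨v0⟩ := hV
    refine ⟨g v0, fun v => gconst v v0, fun h => ?_⟩
    rw [lemA h]; exact gconst _ _
  · exact ⟨0, fun v => absurd ⟨v⟩ hV, fun h => absurd ⟨r2 h⟩ hV⟩
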